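/- Let ε₀ > 0, β ∈ ℝ∖{0}, α ∈ ℝ. Suppose R : Δ_{ε₀} → [−1,1] is C¹-smooth and satisfies 2 Re( iβ z R_z(z) ) = −Re( i a₁(z) ) for all z ∈ Δ_{ε₀}, where a₁ is a nonzero holomorphic function on Δ_{ε₀}. Let δ₀ = 1/(2|α|) if α ≠ 0 and δ₀ = +∞ if α = 0, and define f : Δ_{ε₀} × (−δ₀,δ₀) → ℝ by f(z,t) = −(1/α) log| cos(R(z)+αt)/cos(R(z)) | if α ≠ 0 and f(z,t) = tan(R(z))·t if α = 0. Then Re[ 2iαβ z f_z(z,t) + ( f_t(z,t) − tan(R(z)) )·i a₁(z) ] = 0 for all (z,t) ∈ Δ_{ε₀} × (−δ₀,δ₀). -/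

import Mathlib

open Filter Set Metric Complex

noncomputable def wDeriv (u : ℂ → ℝ) (z : ℂ) : ℂ :=
  (((fderiv ℝ u z) 1 : ℝ) - Complex.I * ((fderiv ℝ u z) Complex.I : ℝ)) / 2

lemma cos_pos_aux {x : ℝ} (hx : |x| ≤ 3/2) : 0 < Real.cos x := by
  have hpi : (3:ℝ) < Real.pi := Real.pi_gt_three
  have h1 := abs_le.1 hx
  exact Real.cos_pos_of_mem_Ioo ⟨by linarith [h1.1], by linarith [h1.2]⟩

/-- Corollary A.5 (pde4): with `R : Δ_{ε₀} → [−1,1]` of class `C¹` satisfying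
`2Re(iβz R_z(z)) = −Re(i a₁(z))` and `f` defined by the explicit formulas, one has
`Re[2iαβz f_z(z,t) + (f_t(z,t) − tan(R(z)))·i a₁(z)] = 0` on `Δ_{ε₀} × (−δ₀, δ₀)`. -/
theorem stmt_14 (ε₀ β α : ℝ) (hε₀ : 0 < ε₀) (hβ : β ≠ 0)
    (R : ℂ → ℝ) (hRval : ∀ z : ℂ, R z ∈ Set.Icc (-1 : ℝ) 1)
    (hRsm : ContDiffOn ℝ 1 R (ball (0:ℂ) ε₀))
    (a₁ : ℂ → ℂ) (ha₁hol : DifferentiableOn ℂ a₁ (ball (0:ℂ) ε₀))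
    (ha₁ne : ∃ z ∈ ball (0:ℂ) ε₀, a₁ z ≠ 0)
    (hReq : ∀ z ∈ ball (0:ℂ) ε₀,
      2 * ((Complex.I * (β:ℂ) * z * wDeriv R z).re) = -((Complex.I * a₁ z).re))
    (T : Set ℝ)
    (hT : (α ≠ 0 → T = Set.Ioo (-(1/(2*|α|))) (1/(2*|α|))) ∧ (α = 0 → T = Set.univ))
    (f : ℂ → ℝ → ℝ)
    (hf : (α ≠ 0 → ∀ z ∈ ball (0:ℂ) ε₀, ∀ t ∈ T,
            f z t = -(1/α) * Real.log |Real.cos (R z + α * t) / Real.cos (R z)|) ∧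
          (α = 0 → ∀ z ∈ ball (0:ℂ) ε₀, ∀ t ∈ T,
            f z t = Real.tan (R z) * t)) :
    ∀ z ∈ ball (0:ℂ) ε₀, ∀ t ∈ T,
      (2 * Complex.I * (α:ℂ) * (β:ℂ) * z * wDeriv (fun w => f w t) z
        + ((deriv (fun s => f z s) t : ℝ) - (Real.tan (R z) : ℝ) : ℂ)
            * Complex.I * a₁ z).re = 0 := by
  intro z hz t ht
  by_cases hα : α = 0
  · -- α = 0 case
    subst hα
    have hTuniv : T = Set.univ := hT.2 rfl
    have hfz : (fun s => f z s) = fun s => Real.tan (R z) * s := by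
      funext s
      exact hf.2 rfl z hz s (by rw [hTuniv]; trivial)
    have hderiv : deriv (fun s => f z s) t = Real.tan (R z) := by
      have hd : HasDerivAt (fun s => Real.tan (R z) * s) (Real.tan (R z) * 1) t :=
        (hasDerivAt_id t).const_mul _
      rw [hfz, hd.deriv, mul_one]
    rw [hderiv]
    norm_num
  · -- α ≠ 0
    have hTIoo : T = Set.Ioo (-(1/(2*|α|))) (1/(2*|α|)) := hT.1 hα
    have hα' : (0:ℝ) < |α| := abs_pos.2 hα
    -- bounds for any s ∈ T
    have habs : ∀ s ∈ T, |α * s| < 1/2 := by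
      intro s hs
      rw [hTIoo] at hs
      have h1 : |s| < 1/(2*|α|) := abs_lt.2 ⟨hs.1, hs.2⟩
      have h2 : |α| * |s| < |α| * (1/(2*|α|)) := mul_lt_mul_of_pos_left h1 hα'
      have h3 : |α| * (1/(2*|α|)) = 1/2 := by
        rw [mul_one_div, div_eq_div_iff (by positivity) (by norm_num : (2:ℝ) ≠ 0)]
        ring
      rw [abs_mul]; linarith
    have hcos : ∀ (x : ℝ), |x| ≤ 1 → ∀ s ∈ T, 0 < Real.cos (x + α * s) := by
      intro x hx s hs
      apply cos_pos_aux
      calc |x + α * s| ≤ |x| + |α * s| := abs_add_le _ _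
        _ ≤ 1 + 1/2 := by linarith [le_of_lt (habs s hs)]
        _ = 3/2 := by norm_num
    have hR1 : ∀ w : ℂ, |R w| ≤ 1 := fun w => abs_le.2 ⟨(hRval w).1, (hRval w).2⟩
    have hcosR : ∀ w : ℂ, 0 < Real.cos (R w) := fun w =>
      cos_pos_aux (le_trans (hR1 w) (by norm_num))
    have hcosRt : 0 < Real.cos (R z + α * t) := hcos (R z) (hR1 z) t ht
    set c : ℝ := Real.tan (R z + α * t) - Real.tan (R z) with hc
    -- Step A : spatial derivative
    have hRd : HasFDerivAt R (fderiv ℝ R z) z := by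
      have : DifferentiableAt ℝ R z :=
        (hRsm.differentiableOn one_ne_zero).differentiableAt (isOpen_ball.mem_nhds hz)
      exact this.hasFDerivAt
    have hg : HasDerivAt (fun x => -(1/α) * Real.log |Real.cos (x + α*t) / Real.cos x|)
        (c / α) (R z) := by
      have h1 : HasDerivAt (fun x : ℝ => Real.log (Real.cos (x + α*t)))
          ((-Real.sin (R z + α*t) * 1) / Real.cos (R z + α*t)) (R z) :=
        (((hasDerivAt_id (R z)).add_const (α*t)).cos).log (ne_of_gt hcosRt)
      have h2 : HasDerivAt (fun x : ℝ => Real.log (Real.cos x))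
          ((-Real.sin (R z) * 1) / Real.cos (R z)) (R z) :=
        ((hasDerivAt_id (R z)).cos).log (ne_of_gt (hcosR z))
      have h3 := (h1.sub h2).const_mul (-(1/α))
      have heq : (fun x => -(1/α) * Real.log |Real.cos (x + α*t) / Real.cos x|)
          =ᶠ[nhds (R z)] (fun x => -(1/α) *
            (Real.log (Real.cos (x + α*t)) - Real.log (Real.cos x))) := by
        have hc1 : Continuous fun x : ℝ => Real.cos (x + α*t) :=
          Real.continuous_cos.comp (continuous_id.add continuous_const)
        have hopen : IsOpen {x : ℝ | 0 < Real.cos (x + α*t) ∧ 0 < Real.cos x} :=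
          IsOpen.and (isOpen_lt continuous_const hc1)
            (isOpen_lt continuous_const Real.continuous_cos)
        have hmem : R z ∈ {x : ℝ | 0 < Real.cos (x + α*t) ∧ 0 < Real.cos x} :=
          ⟨hcosRt, hcosR z⟩
        filter_upwards [hopen.mem_nhds hmem] with x hx
        rw [Real.log_abs, Real.log_div (ne_of_gt hx.1) (ne_of_gt hx.2)]
      have h4 := h3.congr_of_eventuallyEq heq
      refine h4.congr_deriv ?_
      symm
      rw [hc, Real.tan_eq_sin_div_cos, Real.tan_eq_sin_div_cos]
      field_simp
      ring
    have hF : HasFDerivAt (fun w => f w t) ((c/α) • fderiv ℝ R z) z := by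
      have hcomp := hg.comp_hasFDerivAt z hRd
      apply hcomp.congr_of_eventuallyEq
      filter_upwards [isOpen_ball.mem_nhds hz] with w hw
      exact hf.1 hα w hw t ht
    have hw1 : wDeriv (fun w => f w t) z = ((c/α : ℝ) : ℂ) * wDeriv R z := by
      simp only [wDeriv, hF.fderiv, ContinuousLinearMap.coe_smul', Pi.smul_apply,
        smul_eq_mul]
      push_cast
      ring
    -- Step B : time derivative
    have hd2 : HasDerivAt (fun s => f z s) (Real.tan (R z + α * t)) t := by
      have hin : HasDerivAt (fun s : ℝ => R z + α * s) (α * 1) t :=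
        ((hasDerivAt_id t).const_mul α).const_add (R z)
      have hlog : HasDerivAt (fun s : ℝ => Real.log (Real.cos (R z + α * s)))
          ((-Real.sin (R z + α*t) * (α * 1)) / Real.cos (R z + α*t)) t :=
        hin.cos.log (ne_of_gt hcosRt)
      have h3 := (hlog.sub_const (Real.log (Real.cos (R z)))).const_mul (-(1/α))
      have heq : (fun s => f z s) =ᶠ[nhds t] (fun s =>
          -(1/α) * (Real.log (Real.cos (R z + α * s)) - Real.log (Real.cos (R z)))) := by
        have hTopen : IsOpen T := by rw [hTIoo]; exact isOpen_Ioo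
        filter_upwards [hTopen.mem_nhds ht] with s hs
        rw [hf.1 hα z hz s hs, Real.log_abs,
          Real.log_div (ne_of_gt (hcos (R z) (hR1 z) s hs)) (ne_of_gt (hcosR z))]
      have h4 := h3.congr_of_eventuallyEq heq
      refine h4.congr_deriv ?_
      symm
      rw [Real.tan_eq_sin_div_cos]
      field_simp
    have hderiv_t : deriv (fun s => f z s) t = Real.tan (R z + α * t) := hd2.deriv
    -- Final computation
    rw [hderiv_t, hw1]
    have hαc : (α : ℂ) ≠ 0 := Complex.ofReal_ne_zero.2 hα
    have hkey : 2 * Complex.I * (α:ℂ) * (β:ℂ) * z * (((c/α : ℝ) : ℂ) * wDeriv R z)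
        + ((Real.tan (R z + α * t) : ℂ) - (Real.tan (R z) : ℂ)) * Complex.I * a₁ z
        = (c : ℂ) * (2 * (Complex.I * (β:ℂ) * z * wDeriv R z) + Complex.I * a₁ z) := by
      rw [hc]
      push_cast
      field_simp
    rw [hkey, Complex.re_ofReal_mul]
    have hre : (2 * (Complex.I * (β:ℂ) * z * wDeriv R z) + Complex.I * a₁ z).re
        = 2 * (Complex.I * (β:ℂ) * z * wDeriv R z).re + (Complex.I * a₁ z).re := by
      simp
    rw [hre, hReq z hz]
    ring
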